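/- Let ω₀, ω₁ ∈ ℝ with ω₀ ≥ 0 and ω₁ ≥ 0, and let f(x) = -ω₀/2 + ω₀/(1 + exp(-ω₁·x)). Then f is convex on the interval (-∞, 0], i.e. ConvexOn ℝ (Set.Iic 0) f. -/

import Mathlib

open Real Set

private lemma one_add_exp_pos (t : ℝ) : 0 < 1 + Real.exp (-t) := by positivity

private lemma sigmoid_hasDerivAt (t : ℝ) :
    HasDerivAt (fun t : ℝ => (1 + Real.exp (-t))⁻¹)
      (Real.exp (-t) / (1 + Real.exp (-t)) ^ 2) t := by
  have h1 : HasDerivAt (fun t : ℝ => 1 + Real.exp (-t)) (-Real.exp (-t)) t := by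
    have := (Real.hasDerivAt_exp (-t)).comp t (hasDerivAt_neg t)
    simpa using (this.const_add 1)
  have := h1.fun_inv (ne_of_gt (one_add_exp_pos t))
  refine this.congr_deriv ?_
  ring

private lemma sigmoid_deriv :
    deriv (fun t : ℝ => (1 + Real.exp (-t))⁻¹)
      = fun t => Real.exp (-t) / (1 + Real.exp (-t)) ^ 2 := by
  funext t; exact (sigmoid_hasDerivAt t).deriv

private lemma sigmoid_deriv2_hasDerivAt (t : ℝ) :
    HasDerivAt (fun t : ℝ => Real.exp (-t) / (1 + Real.exp (-t)) ^ 2)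
      (Real.exp (-t) * (Real.exp (-t) - 1) / (1 + Real.exp (-t)) ^ 3) t := by
  have hexp : HasDerivAt (fun t : ℝ => Real.exp (-t)) (-Real.exp (-t)) t := by
    simpa [Function.comp_def] using (Real.hasDerivAt_exp (-t)).comp t (hasDerivAt_neg t)
  have h1 : HasDerivAt (fun t : ℝ => 1 + Real.exp (-t)) (-Real.exp (-t)) t := by
    simpa using hexp.const_add 1
  have h2 : HasDerivAt (fun t : ℝ => (1 + Real.exp (-t)) ^ 2)
      (2 * (1 + Real.exp (-t)) ^ 1 * (-Real.exp (-t))) t := by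
    simpa using h1.fun_pow 2
  have hne : (1 + Real.exp (-t)) ^ 2 ≠ 0 := by positivity
  have := hexp.fun_div h2 hne
  refine this.congr_deriv ?_
  have h0 : (1 + Real.exp (-t)) ≠ 0 := ne_of_gt (one_add_exp_pos t)
  field_simp
  ring

private lemma sigmoid_convexOn :
    ConvexOn ℝ (Set.Iic (0 : ℝ)) (fun t : ℝ => (1 + Real.exp (-t))⁻¹) := by
  apply convexOn_of_deriv2_nonneg (convex_Iic 0)
  · exact fun t _ => (sigmoid_hasDerivAt t).continuousAt.continuousWithinAt
  · exact fun t _ => ((sigmoid_hasDerivAt t).differentiableAt).differentiableWithinAt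
  · rw [sigmoid_deriv]
    exact fun t _ => ((sigmoid_deriv2_hasDerivAt t).differentiableAt).differentiableWithinAt
  · intro t ht
    rw [Function.iterate_succ, Function.iterate_one, Function.comp_apply, sigmoid_deriv,
      (sigmoid_deriv2_hasDerivAt t).deriv]
    have ht' : t < 0 := by simpa [interior_Iic] using ht
    have h1 : (1:ℝ) ≤ Real.exp (-t) := by
      rw [Real.one_le_exp_iff]; linarith
    have h2 := one_add_exp_pos t
    apply div_nonneg
    · exact mul_nonneg (Real.exp_nonneg _) (by linarith)
    · positivity

/-- For `ω₀ ≥ 0`, `ω₁ ≥ 0`, the CLU sigmoid branch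
`f(x) = -ω₀/2 + ω₀/(1 + exp(-ω₁·x))` is convex on `(-∞, 0]`. -/
theorem clu_sigmoid_convexOn_Iic (ω₀ ω₁ : ℝ) (h₀ : 0 ≤ ω₀) (h₁ : 0 ≤ ω₁)
    (f : ℝ → ℝ)
    (hf : ∀ x, f x = -ω₀ / 2 + ω₀ / (1 + Real.exp (-ω₁ * x))) :
    ConvexOn ℝ (Set.Iic (0 : ℝ)) f := by
  have hg := sigmoid_convexOn
  have hcomp : ConvexOn ℝ (Set.Iic (0 : ℝ))
      (fun x : ℝ => (1 + Real.exp (-(ω₁ * x)))⁻¹) := by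
    refine ⟨convex_Iic 0, fun x hx y hy a b ha hb hab => ?_⟩
    have hx' : ω₁ * x ∈ Set.Iic (0:ℝ) := mul_nonpos_of_nonneg_of_nonpos h₁ hx
    have hy' : ω₁ * y ∈ Set.Iic (0:ℝ) := mul_nonpos_of_nonneg_of_nonpos h₁ hy
    have := hg.2 hx' hy' ha hb hab
    simpa [smul_eq_mul, mul_add, mul_left_comm, mul_comm, mul_assoc] using this
  have hsmul := hcomp.smul h₀
  have hfinal := hsmul.add_const (-ω₀ / 2)
  suffices hfx : f = (fun x : ℝ => ω₀ • (1 + Real.exp (-(ω₁ * x)))⁻¹) + fun x => -ω₀ / 2 by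
    rw [hfx]; exact hfinal
  funext x
  rw [hf x]
  simp [smul_eq_mul, div_eq_mul_inv, neg_mul]
  ring
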